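/- Let X be a Coxeter graph satisfying condition (★), s ∈ S(X), and w ∈ W_c(X). Then t_s c_w = −c_w + q^{1/2}( c_{sw} + Σ_{x ≺ w, sx < x} μ(x,w) c_x ) if ℓ(sw) > ℓ(w), and t_s c_w = q c_w otherwise, where by convention c_x = 0 for x ∉ W_c(X). -/

import Mathlib

/-!
Common setup: Coxeter systems, Bruhat order, fully commutative elements,
the Hecke algebra `H(X)`, the generalized Temperley--Lieb algebra `TL(X)`,
and the polynomial families `R`, `P` (Kazhdan--Lusztig), `D`, `a`, `L`.
-/

open LaurentPolynomial Polynomial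

noncomputable section

namespace TLPaper

/-- The ring `A = ℤ[q^{1/2}, q^{-1/2}]`, modelled as Laurent polynomials over `ℤ`
in the variable `T = q^{1/2}`. -/
abbrev A : Type := LaurentPolynomial ℤ

/-- The element `q = (q^{1/2})^2` of `A`. -/
def q : A := LaurentPolynomial.T 2

variable {B : Type*} {W : Type*} [Group W] {M : CoxeterMatrix B} (cs : CoxeterSystem M W)

/-- The Bruhat order on a Coxeter group: the reflexive-transitive closure of the relation
`x → xt` where `t` is a reflection and the length increases. -/
def bruhatLE : W → W → Prop :=
  Relation.ReflTransGen
    (fun x y => (∃ t : W, cs.IsReflection t ∧ y = x * t) ∧ cs.length x < cs.length y)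

/-- Strict Bruhat order. -/
def bruhatLT (x w : W) : Prop := bruhatLE cs x w ∧ x ≠ w

/-- A single commutation move on words: interchanging two adjacent commuting letters
(i.e. letters `i`, `j` with `M i j = 2`). -/
def CommMove (M : CoxeterMatrix B) (l₁ l₂ : List B) : Prop :=
  ∃ (a b : List B) (i j : B), M i j = 2 ∧ l₁ = a ++ i :: j :: b ∧ l₂ = a ++ j :: i :: b

/-- An element `w` is *fully commutative* if any reduced word for `w` can be obtained
from any other by a sequence of commutation moves. -/
def FullyCommutative (w : W) : Prop :=
  ∀ l₁ l₂ : List B, (cs.IsReduced l₁ ∧ cs.wordProd l₁ = w) →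
    (cs.IsReduced l₂ ∧ cs.wordProd l₂ = w) →
    Relation.ReflTransGen (CommMove M) l₁ l₂

/-- All the data of the paper: the Hecke algebra `H` of the Coxeter system `cs` with its
standard basis `Tw`, the `R`-polynomials, the Kazhdan--Lusztig polynomials `P`,
the generalized Temperley--Lieb algebra `TL = H/J` (with `proj` the canonical projection),
the `D`-polynomials, the `a`-polynomials, and the IC basis `c` with its `L`-polynomials.
The polynomial `L x w` is a polynomial in the variable `v = q^{-1/2}`;
all other polynomial families are polynomials in `q`. -/
structure TLContext {B : Type*} {W : Type*} [Group W] {M : CoxeterMatrix B}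
    (cs : CoxeterSystem M W)
    (H : Type*) [Ring H] [Algebra A H] (TL : Type*) [Ring TL] [Algebra A TL] where
  /-- The standard basis `{T_w}` of the Hecke algebra. -/
  Tw : W → H
  Tw_indep : LinearIndependent A Tw
  Tw_span : Submodule.span A (Set.range Tw) = ⊤
  Tw_one : Tw 1 = 1
  /-- Multiplication rule, case `ℓ(ws) > ℓ(w)`. -/
  Tw_mul_simple_of_lt : ∀ (w : W) (i : B),
    cs.length w < cs.length (w * cs.simple i) →
    Tw w * Tw (cs.simple i) = Tw (w * cs.simple i)
  /-- Multiplication rule, case `ℓ(ws) < ℓ(w)`. -/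
  Tw_mul_simple_of_gt : ∀ (w : W) (i : B),
    cs.length (w * cs.simple i) < cs.length w →
    Tw w * Tw (cs.simple i) = q • Tw (w * cs.simple i) + (q - 1) • Tw w
  /-- `Tinv w` is the inverse of `T_w` in `H`. -/
  Tinv : W → H
  Tw_mul_Tinv : ∀ w : W, Tw w * Tinv w = 1
  Tinv_mul_Tw : ∀ w : W, Tinv w * Tw w = 1
  /-- Bruhat lower sets are finite. -/
  finite_bruhatLE : ∀ w : W, {x | bruhatLE cs x w}.Finite
  /-- The `R`-polynomials. -/
  R : W → W → Polynomial ℤ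
  R_self : ∀ w : W, R w w = 1
  R_eq_zero : ∀ x w : W, ¬ bruhatLE cs x w → R x w = 0
  /-- `T_{w⁻¹}⁻¹ = ε_w q^{-ℓ(w)} Σ_{x ≤ w} ε_x R_{x,w}(q) T_x`. -/
  Tinv_eq : ∀ w : W, Tinv w⁻¹ =
    ((-1 : A) ^ cs.length w * LaurentPolynomial.T (-2 * (cs.length w : ℤ))) •
      ∑ᶠ x ∈ {x | bruhatLE cs x w},
        ((-1 : A) ^ cs.length x * Polynomial.aeval q (R x w)) • Tw x
  /-- The Kazhdan--Lusztig polynomials. -/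
  P : W → W → Polynomial ℤ
  P_self : ∀ w : W, P w w = 1
  P_eq_zero : ∀ x w : W, ¬ bruhatLE cs x w → P x w = 0
  /-- `deg P_{x,w} ≤ (ℓ(w) - ℓ(x) - 1)/2` for `x < w`. -/
  P_degree : ∀ x w : W, bruhatLT cs x w →
    2 * (P x w).natDegree + 1 ≤ cs.length w - cs.length x
  /-- The involution `ι` of the Hecke algebra. -/
  iotaH : H →+* H
  iotaH_involutive : ∀ h : H, iotaH (iotaH h) = h
  iotaH_Tw : ∀ w : W, iotaH (Tw w) = Tinv w⁻¹
  iotaH_smul : ∀ (a : A) (h : H),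
    iotaH (a • h) = (LaurentPolynomial.invert (R := ℤ) a) • iotaH h
  /-- `ι` fixes the Kazhdan--Lusztig basis element
  `C'_w = q^{-ℓ(w)/2} Σ_{x ≤ w} P_{x,w}(q) T_x`. -/
  iotaH_KL : ∀ w : W,
    iotaH ((LaurentPolynomial.T (-(cs.length w : ℤ)) : A) •
      ∑ᶠ x ∈ {x | bruhatLE cs x w}, (Polynomial.aeval q (P x w)) • Tw x) =
    (LaurentPolynomial.T (-(cs.length w : ℤ)) : A) •
      ∑ᶠ x ∈ {x | bruhatLE cs x w}, (Polynomial.aeval q (P x w)) • Tw x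
  /-- The canonical projection `σ : H → TL = H/J`. -/
  proj : H →ₐ[A] TL
  proj_surjective : Function.Surjective proj
  /-- The kernel of `σ` is the two-sided ideal `J` generated by the elements
  `Σ_{w ∈ ⟨s_i, s_j⟩} T_w`, over all pairs of non-commuting generators `s_i, s_j`
  such that `s_i s_j` has finite order. -/
  proj_ker : ∀ h : H, proj h = 0 ↔ h ∈ Submodule.span A
    {x : H | ∃ (i j : B) (a b : H), M i j ≠ 0 ∧ M i j ≠ 1 ∧ M i j ≠ 2 ∧
      x = a * (∑ᶠ u ∈ (Subgroup.closure {cs.simple i, cs.simple j} : Set W), Tw u) * b}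
  /-- The images `t_w = σ(T_w)`, `w` fully commutative, are linearly independent. -/
  t_indep : LinearIndependent A
    (fun x : {w : W // FullyCommutative cs w} => proj (Tw x.1))
  /-- The `D`-polynomials. -/
  D : W → W → Polynomial ℤ
  /-- `t_w = Σ_{x ∈ W_c, x ≤ w} D_{x,w}(q) t_x`. -/
  D_eq : ∀ w : W, proj (Tw w) =
    ∑ᶠ x ∈ {x | FullyCommutative cs x ∧ bruhatLE cs x w},
      (Polynomial.aeval q (D x w)) • proj (Tw x)
  D_self : ∀ w : W, FullyCommutative cs w → D w w = 1
  D_eq_zero : ∀ x w : W, ¬ (FullyCommutative cs x ∧ bruhatLE cs x w) → D x w = 0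
  /-- The `a`-polynomials. -/
  apol : W → W → Polynomial ℤ
  /-- `(t_{w⁻¹})⁻¹ = q^{-ℓ(w)} Σ_{y ∈ W_c, y ≤ w} a_{y,w}(q) t_y` for `w ∈ W_c`. -/
  apol_eq : ∀ w : W, FullyCommutative cs w →
    proj (Tinv w⁻¹) = (LaurentPolynomial.T (-2 * (cs.length w : ℤ)) : A) •
      ∑ᶠ y ∈ {y | FullyCommutative cs y ∧ bruhatLE cs y w},
        (Polynomial.aeval q (apol y w)) • proj (Tw y)
  apol_self : ∀ w : W, FullyCommutative cs w → apol w w = 1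
  apol_eq_zero : ∀ y w : W,
    ¬ (FullyCommutative cs y ∧ FullyCommutative cs w ∧ bruhatLE cs y w) → apol y w = 0
  /-- The involution `ι` of the Temperley--Lieb algebra. -/
  iotaTL : TL →+* TL
  iotaTL_involutive : ∀ x : TL, iotaTL (iotaTL x) = x
  iotaTL_t : ∀ w : W, iotaTL (proj (Tw w)) = proj (Tinv w⁻¹)
  iotaTL_smul : ∀ (a : A) (x : TL),
    iotaTL (a • x) = (LaurentPolynomial.invert (R := ℤ) a) • iotaTL x
  /-- The `L`-polynomials: `L x w` is a polynomial in the variable `v = q^{-1/2}`, and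
  `L_{x,w}(q^{-1/2})` is obtained by evaluating it at `T (-1) = q^{-1/2}`. -/
  L : W → W → Polynomial ℤ
  /-- The IC basis `{c_w}` of `TL`. -/
  c : W → TL
  /-- `c_w = Σ_{x ∈ W_c, x ≤ w} q^{-ℓ(x)/2} L_{x,w}(q^{-1/2}) t_x`. -/
  c_eq : ∀ w : W, FullyCommutative cs w →
    c w = ∑ᶠ x ∈ {x | FullyCommutative cs x ∧ bruhatLE cs x w},
      ((LaurentPolynomial.T (-(cs.length x : ℤ)) : A) *
        Polynomial.aeval (R := ℤ) ((LaurentPolynomial.T (-1) : A)) (L x w)) • proj (Tw x)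
  /-- Convention: `c_x = 0` for `x ∉ W_c`. -/
  c_eq_zero : ∀ w : W, ¬ FullyCommutative cs w → c w = 0
  /-- The IC basis is `ι`-invariant. -/
  c_invariant : ∀ w : W, FullyCommutative cs w → iotaTL (c w) = c w
  L_self : ∀ w : W, L w w = 1
  L_eq_zero : ∀ x w : W,
    ¬ (FullyCommutative cs x ∧ FullyCommutative cs w ∧ bruhatLE cs x w) → L x w = 0
  /-- `L_{x,w}(q^{-1/2}) ∈ q^{-1/2} ℤ[q^{-1/2}]` for `x < w`. -/
  L_coeff_zero : ∀ x w : W, bruhatLT cs x w → (L x w).coeff 0 = 0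

namespace TLContext

variable {B : Type*} {W : Type*} [Group W] {M : CoxeterMatrix B} {cs : CoxeterSystem M W}
  {H : Type*} [Ring H] [Algebra A H] {TL : Type*} [Ring TL] [Algebra A TL]
  (Ctx : TLContext cs H TL)

/-- `μ(x,w)`: the coefficient of `q^{(ℓ(w)-ℓ(x)-1)/2}` in the Kazhdan--Lusztig
polynomial `P_{x,w}(q)` (which is zero unless `ℓ(w) - ℓ(x)` is odd). -/
def mu (x w : W) : ℤ :=
  if Odd (cs.length w - cs.length x) then
    (Ctx.P x w).coeff ((cs.length w - cs.length x - 1) / 2)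
  else 0

/-- The Kazhdan--Lusztig basis element `C'_w = q^{-ℓ(w)/2} Σ_{x ≤ w} P_{x,w}(q) T_x`. -/
def KL (w : W) : H :=
  (LaurentPolynomial.T (-(cs.length w : ℤ)) : A) •
    ∑ᶠ x ∈ {x | bruhatLE cs x w}, (Polynomial.aeval q (Ctx.P x w)) • Ctx.Tw x

/-- Condition (★): the projection sends the Kazhdan--Lusztig basis element `C'_w`
to `c_w` if `w ∈ W_c` and to `0` otherwise. -/
def Star : Prop :=
  (∀ w : W, FullyCommutative cs w → Ctx.proj (Ctx.KL w) = Ctx.c w) ∧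
  (∀ w : W, ¬ FullyCommutative cs w → Ctx.proj (Ctx.KL w) = 0)

/-- `L_{x,w}(q^{-1/2})` as an element of `A`. -/
def Lq (x w : W) : A := Polynomial.aeval (R := ℤ) ((LaurentPolynomial.T (-1) : A)) (Ctx.L x w)

/-- `L_{x,w}(q^{1/2})` as an element of `A`. -/
def Lq' (x w : W) : A := Polynomial.aeval (R := ℤ) ((LaurentPolynomial.T 1 : A)) (Ctx.L x w)

end TLContext



section Bruhat
variable {B : Type*} {W : Type*} [Group W] {M : CoxeterMatrix B} {cs : CoxeterSystem M W}

lemma bruhatLE_refl (x : W) : bruhatLE cs x x := Relation.ReflTransGen.refl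

lemma length_le_of_bruhatLE {x w : W} (h : bruhatLE cs x w) :
    cs.length x ≤ cs.length w := by
  induction h with
  | refl => exact le_refl _
  | tail _ h2 ih => exact ih.trans (le_of_lt h2.2)

lemma eq_of_bruhatLE_of_length_le {x w : W} (h : bruhatLE cs x w)
    (hl : cs.length w ≤ cs.length x) : x = w := by
  induction h with
  | refl => rfl
  | @tail b c h1 h2 ih =>
      have := length_le_of_bruhatLE h1
      omega

lemma length_lt_of_bruhatLT {x w : W} (h : bruhatLT cs x w) :
    cs.length x < cs.length w := by
  rcases lt_or_ge (cs.length x) (cs.length w) with h' | h'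
  · exact h'
  · exact absurd (eq_of_bruhatLE_of_length_le h.1 h') h.2

lemma not_bruhatLE_of_length_lt {x w : W} (h : cs.length w < cs.length x) :
    ¬ bruhatLE cs x w := fun hc => absurd (length_le_of_bruhatLE hc) (by omega)

lemma bruhatLE_cases {x w : W} (h : bruhatLE cs x w) : x = w ∨ bruhatLT cs x w := by
  by_cases hx : x = w
  · exact Or.inl hx
  · exact Or.inr ⟨h, hx⟩

lemma bruhatLE_of_bruhatLT {x w : W} (h : bruhatLT cs x w) : bruhatLE cs x w := h.1

end Bruhat

namespace TLContext

variable {B : Type*} {W : Type*} [Group W] {M : CoxeterMatrix B} {cs : CoxeterSystem M W}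
  {H : Type*} [Ring H] [Algebra A H] {TL : Type*} [Ring TL] [Algebra A TL]
  (Ctx : TLContext cs H TL)

lemma Tw_simple_sq (i : B) :
    Ctx.Tw (cs.simple i) * Ctx.Tw (cs.simple i) = q • (1 : H) + (q - 1) • Ctx.Tw (cs.simple i) := by
  have h := Ctx.Tw_mul_simple_of_gt (cs.simple i) i
    (by rw [cs.simple_mul_simple_self]; simp [cs.length_simple])
  rwa [cs.simple_mul_simple_self, Ctx.Tw_one] at h

lemma Tw_simple_mul_of_lt (i : B) :
    ∀ (x : W), cs.length x < cs.length (cs.simple i * x) →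
      Ctx.Tw (cs.simple i) * Ctx.Tw x = Ctx.Tw (cs.simple i * x) := by
  suffices aux : ∀ (n : ℕ) (x : W), cs.length x = n →
      cs.length x < cs.length (cs.simple i * x) →
      Ctx.Tw (cs.simple i) * Ctx.Tw x = Ctx.Tw (cs.simple i * x) by
    exact fun x h => aux (cs.length x) x rfl h
  intro n
  induction n using Nat.strong_induction_on with
  | _ n ih =>
    intro x hlen hlt
    by_cases hx : x = 1
    · subst hx
      rw [Ctx.Tw_one, mul_one, mul_one]
    · obtain ⟨j, hj⟩ := cs.exists_rightDescent_of_ne_one hx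
      have hj' : cs.length (x * cs.simple j) < cs.length x := hj
      set x' := x * cs.simple j with hx'def
      have hxx : x' * cs.simple j = x := by
        rw [hx'def, mul_assoc, cs.simple_mul_simple_self, mul_one]
      have hlx' : cs.length x' + 1 = cs.length x := by
        rcases cs.length_mul_simple x j with h' | h'
        · rw [← hx'def] at h'; omega
        · rw [hx'def]; exact h'
      have hlt' : cs.length x' < cs.length (x' * cs.simple j) := by rw [hxx]; omega
      have hTx : Ctx.Tw x = Ctx.Tw x' * Ctx.Tw (cs.simple j) := by
        rw [Ctx.Tw_mul_simple_of_lt x' j hlt', hxx]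
      have hsx' : cs.length x' < cs.length (cs.simple i * x') := by
        by_contra hcon
        push_neg at hcon
        have hd : cs.length (cs.simple i * x') + 1 = cs.length x' := by
          rcases cs.length_simple_mul x' i with h' | h'
          · omega
          · exact h'
        have hmul : cs.simple i * x' * cs.simple j = cs.simple i * x := by
          rw [← hxx, mul_assoc]
        have := cs.length_mul_le (cs.simple i * x') (cs.simple j)
        rw [cs.length_simple, hmul] at this
        have hbr : cs.length (x * cs.simple j) = cs.length x' := by rw [hx'def]
        omega
      have hIH := ih (cs.length x') (by omega) x' rfl hsx'
      have hsx'len : cs.length (cs.simple i * x') = cs.length x' + 1 := by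
        rcases cs.length_simple_mul x' i with h' | h'
        · exact h'
        · omega
      have hslt : cs.length (cs.simple i * x) = cs.length x + 1 := by
        rcases cs.length_simple_mul x i with h' | h'
        · exact h'
        · omega
      have hfin : cs.length (cs.simple i * x') < cs.length (cs.simple i * x' * cs.simple j) := by
        have hmul : cs.simple i * x' * cs.simple j = cs.simple i * x := by
          rw [← hxx, mul_assoc]
        rw [hmul, hslt]
        omega
      calc Ctx.Tw (cs.simple i) * Ctx.Tw x
          = Ctx.Tw (cs.simple i) * Ctx.Tw x' * Ctx.Tw (cs.simple j) := by
            rw [hTx, mul_assoc]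
        _ = Ctx.Tw (cs.simple i * x') * Ctx.Tw (cs.simple j) := by rw [hIH]
        _ = Ctx.Tw (cs.simple i * x' * cs.simple j) :=
            Ctx.Tw_mul_simple_of_lt _ j hfin
        _ = Ctx.Tw (cs.simple i * x) := by rw [← hxx, mul_assoc]

lemma Tw_simple_mul_of_gt (i : B) (x : W) (h : cs.length (cs.simple i * x) < cs.length x) :
    Ctx.Tw (cs.simple i) * Ctx.Tw x
      = q • Ctx.Tw (cs.simple i * x) + (q - 1) • Ctx.Tw x := by
  set y := cs.simple i * x with hy
  have hxy : cs.simple i * y = x := by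
    rw [hy, ← mul_assoc, cs.simple_mul_simple_self, one_mul]
  have hlty : cs.length y < cs.length (cs.simple i * y) := by rw [hxy]; omega
  have hTx : Ctx.Tw x = Ctx.Tw (cs.simple i) * Ctx.Tw y := by
    rw [Ctx.Tw_simple_mul_of_lt i y hlty, hxy]
  rw [hTx, ← mul_assoc, Ctx.Tw_simple_sq]
  rw [add_mul, smul_mul_assoc, smul_mul_assoc, one_mul, ← hTx]

lemma Tinv_simple (i : B) :
    Ctx.Tinv (cs.simple i)
      = (LaurentPolynomial.T (-2) : A) • Ctx.Tw (cs.simple i)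
        + ((LaurentPolynomial.T (-2) : A) - 1) • (1 : H) := by
  have key : Ctx.Tw (cs.simple i) *
      ((LaurentPolynomial.T (-2) : A) • Ctx.Tw (cs.simple i)
        + ((LaurentPolynomial.T (-2) : A) - 1) • (1 : H)) = 1 := by
    rw [mul_add, mul_smul_comm, mul_smul_comm, mul_one, Ctx.Tw_simple_sq]
    rw [smul_add, smul_smul, smul_smul]
    have hq : (LaurentPolynomial.T (-2) : A) * q = 1 := by
      rw [q, ← LaurentPolynomial.T_add]; norm_num
    rw [hq, one_smul]
    rw [add_assoc, ← add_smul]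
    have : (LaurentPolynomial.T (-2) : A) * (q - 1) + (LaurentPolynomial.T (-2) - 1) = 0 := by
      rw [mul_sub, hq, mul_one]; ring
    rw [this, zero_smul, add_zero]
  calc Ctx.Tinv (cs.simple i) = Ctx.Tinv (cs.simple i) * 1 := (mul_one _).symm
    _ = Ctx.Tinv (cs.simple i) * (Ctx.Tw (cs.simple i) * _) := by rw [key]
    _ = (Ctx.Tinv (cs.simple i) * Ctx.Tw (cs.simple i)) * _ := by rw [mul_assoc]
    _ = _ := by rw [Ctx.Tinv_mul_Tw, one_mul]

end TLContext





lemma T_mul_apply (m : ℤ) (f : A) (n : ℤ) :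
    ((LaurentPolynomial.T m * f : A).coeff n) = f.coeff (n - m) := by
  have h := AddMonoidAlgebra.coeff_single_mul_apply f (1 : ℤ) m n
  rw [show (LaurentPolynomial.T m : A) = AddMonoidAlgebra.single m 1 from rfl, h, one_mul,
    neg_add_eq_sub]

lemma mul_T_apply (f : A) (m n : ℤ) :
    ((f * LaurentPolynomial.T m : A).coeff n) = f.coeff (n - m) := by
  rw [← LaurentPolynomial.T_mul, T_mul_apply]

lemma q_pow (k : ℕ) : (q ^ k : A) = LaurentPolynomial.T (2 * k) := by
  rw [q, LaurentPolynomial.T_pow]; ring_nf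

lemma aeval_q_apply (P : Polynomial ℤ) (n : ℤ) :
    (Polynomial.aeval q P : A).coeff n
      = ∑ i ∈ Finset.range (P.natDegree + 1), (if (2 * i : ℤ) = n then P.coeff i else 0) := by
  rw [Polynomial.aeval_eq_sum_range]
  rw [AddMonoidAlgebra.coeff_sum, Finsupp.finset_sum_apply]
  refine Finset.sum_congr rfl fun i _ => ?_
  rw [AddMonoidAlgebra.coeff_smul_apply, q_pow, LaurentPolynomial.T_apply]
  simp [smul_eq_mul, mul_ite]

lemma Pq_apply_eq_zero_of_lt (P : Polynomial ℤ) {n : ℤ} (h : 2 * (P.natDegree : ℤ) < n) :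
    (Polynomial.aeval q P : A).coeff n = 0 := by
  rw [aeval_q_apply]
  refine Finset.sum_eq_zero fun i hi => ?_
  rw [if_neg]
  intro hc
  have : (i : ℤ) ≤ (P.natDegree : ℤ) := by
    exact_mod_cast Nat.lt_succ_iff.mp (Finset.mem_range.mp hi)
  omega

lemma Pq_apply_eq_zero_of_odd (P : Polynomial ℤ) {n : ℤ} (h : Odd n) :
    (Polynomial.aeval q P : A).coeff n = 0 := by
  rw [aeval_q_apply]
  refine Finset.sum_eq_zero fun i _ => ?_
  rw [if_neg]
  intro hc
  exact (Int.not_odd_iff_even.mpr ⟨i, by omega⟩) h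

lemma Pq_apply_eq_zero_of_neg (P : Polynomial ℤ) {n : ℤ} (h : n < 0) :
    (Polynomial.aeval q P : A).coeff n = 0 := by
  rw [aeval_q_apply]
  refine Finset.sum_eq_zero fun i _ => ?_
  rw [if_neg]; omega

lemma Pq_apply_two_mul (P : Polynomial ℤ) (d : ℕ) :
    (Polynomial.aeval q P : A).coeff (2 * (d : ℤ)) = P.coeff d := by
  rw [aeval_q_apply]
  rcases lt_or_ge P.natDegree d with hd | hd
  · rw [Polynomial.coeff_eq_zero_of_natDegree_lt hd]
    refine Finset.sum_eq_zero fun i hi => ?_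
    rw [if_neg]
    intro hc
    have : i = d := by omega
    exact absurd (Finset.mem_range.mp hi) (by omega)
  · rw [Finset.sum_eq_single d]
    · rw [if_pos rfl]
    · intro i _ hne
      rw [if_neg]; intro hc; exact hne (by omega)
    · intro hmem
      exact absurd (Finset.mem_range.mpr (by omega)) hmem

lemma one_apply_A (n : ℤ) : (1 : A).coeff n = if n = 0 then 1 else 0 := by
  rw [show (1 : A) = LaurentPolynomial.T 0 from (LaurentPolynomial.T_zero).symm,
    LaurentPolynomial.T_apply]
  simp [eq_comm]





namespace TLContext
variable {B : Type*} {W : Type*} [Group W] {M : CoxeterMatrix B} {cs : CoxeterSystem M W}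
  {H : Type*} [Ring H] [Algebra A H] {TL : Type*} [Ring TL] [Algebra A TL]
  (Ctx : TLContext cs H TL)

/-- Coefficient of `KL u` in the standard basis. -/
def cKL (u x : W) : A :=
  (LaurentPolynomial.T (-(cs.length u : ℤ)) : A) * Polynomial.aeval q (Ctx.P x u)

lemma KL_eq_sum (u : W) (E : Finset W) (hE : ∀ x, bruhatLE cs x u → x ∈ E) :
    Ctx.KL u = ∑ x ∈ E, Ctx.cKL u x • Ctx.Tw x := by
  rw [TLContext.KL]
  rw [show {x | bruhatLE cs x u} = (((Ctx.finite_bruhatLE u).toFinset : Finset W) : Set W) from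
    (Set.Finite.coe_toFinset _).symm, finsum_mem_coe_finset, Finset.smul_sum]
  rw [Finset.sum_subset (fun x hx => hE x ((Set.Finite.mem_toFinset (Ctx.finite_bruhatLE u)).mp hx))]
  · exact Finset.sum_congr rfl fun x _ => (smul_smul _ _ _)
  · intro x _ hx
    rw [Set.Finite.mem_toFinset] at hx
    rw [Ctx.P_eq_zero x u hx]
    simp

lemma Tinv_eq_sum (u : W) (E : Finset W) (hE : ∀ x, bruhatLE cs x u → x ∈ E) :
    Ctx.Tinv u⁻¹ = ∑ x ∈ E,
      (((-1 : A) ^ cs.length u * LaurentPolynomial.T (-2 * (cs.length u : ℤ)))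
        * ((-1 : A) ^ cs.length x * Polynomial.aeval q (Ctx.R x u))) • Ctx.Tw x := by
  rw [Ctx.Tinv_eq u]
  rw [show {x | bruhatLE cs x u} = (((Ctx.finite_bruhatLE u).toFinset : Finset W) : Set W) from
    (Set.Finite.coe_toFinset _).symm, finsum_mem_coe_finset, Finset.smul_sum]
  rw [Finset.sum_subset (fun x hx => hE x ((Set.Finite.mem_toFinset (Ctx.finite_bruhatLE u)).mp hx))]
  · exact Finset.sum_congr rfl fun x _ => (smul_smul _ _ _)
  · intro x _ hx
    rw [Set.Finite.mem_toFinset] at hx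
    rw [Ctx.R_eq_zero x u hx]
    simp

/-- key expansion of left multiplication by `T_s` on a basis expansion. -/
lemma Tw_simple_mul_sum (i : B) (F : Finset W)
    (hF : ∀ x ∈ F, cs.simple i * x ∈ F) (a : W → A) :
    Ctx.Tw (cs.simple i) * (∑ x ∈ F, a x • Ctx.Tw x)
      = ∑ y ∈ F, (if cs.length (cs.simple i * y) < cs.length y
          then a (cs.simple i * y) + (q - 1) * a y
          else q * a (cs.simple i * y)) • Ctx.Tw y := by
  classical
  have hcancel : ∀ x : W, cs.simple i * (cs.simple i * x) = x := fun x => by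
    rw [← mul_assoc, cs.simple_mul_simple_self, one_mul]
  rw [Finset.mul_sum]
  have hsplit : ∀ (g : W → H), ∑ x ∈ F, g x =
      ∑ x ∈ F.filter (fun x => cs.length x < cs.length (cs.simple i * x)), g x
      + ∑ x ∈ F.filter (fun x => ¬ cs.length x < cs.length (cs.simple i * x)), g x :=
    fun g => (Finset.sum_filter_add_sum_filter_not F _ g).symm
  rw [hsplit (fun x => Ctx.Tw (cs.simple i) * (a x • Ctx.Tw x)),
      hsplit (fun y => (if cs.length (cs.simple i * y) < cs.length y
          then a (cs.simple i * y) + (q - 1) * a y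
          else q * a (cs.simple i * y)) • Ctx.Tw y)]
  have hmem₁ : ∀ x ∈ F.filter (fun x => cs.length x < cs.length (cs.simple i * x)),
      cs.simple i * x ∈ F.filter (fun x => ¬ cs.length x < cs.length (cs.simple i * x)) := by
    intro x hx
    rw [Finset.mem_filter] at hx ⊢
    refine ⟨hF x hx.1, ?_⟩
    rw [hcancel]
    omega
  have hmem₂ : ∀ x ∈ F.filter (fun x => ¬ cs.length x < cs.length (cs.simple i * x)),
      cs.simple i * x ∈ F.filter (fun x => cs.length x < cs.length (cs.simple i * x)) := by
    intro x hx
    rw [Finset.mem_filter] at hx ⊢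
    refine ⟨hF x hx.1, ?_⟩
    rw [hcancel]
    have := cs.length_simple_mul_ne x i
    omega
  -- first sum : every x has s x > x
  have h1 : ∑ x ∈ F.filter (fun x => cs.length x < cs.length (cs.simple i * x)),
        Ctx.Tw (cs.simple i) * (a x • Ctx.Tw x)
      = ∑ x ∈ F.filter (fun x => cs.length x < cs.length (cs.simple i * x)),
        a x • Ctx.Tw (cs.simple i * x) := by
    refine Finset.sum_congr rfl fun x hx => ?_
    rw [Finset.mem_filter] at hx
    rw [mul_smul_comm, Ctx.Tw_simple_mul_of_lt i x hx.2]
  have h2 : ∑ x ∈ F.filter (fun x => ¬ cs.length x < cs.length (cs.simple i * x)),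
        Ctx.Tw (cs.simple i) * (a x • Ctx.Tw x)
      = ∑ x ∈ F.filter (fun x => ¬ cs.length x < cs.length (cs.simple i * x)),
        ((q * a x) • Ctx.Tw (cs.simple i * x) + ((q-1) * a x) • Ctx.Tw x) := by
    refine Finset.sum_congr rfl fun x hx => ?_
    rw [Finset.mem_filter] at hx
    have hgt : cs.length (cs.simple i * x) < cs.length x := by
      have := cs.length_simple_mul_ne x i
      omega
    rw [mul_smul_comm, Ctx.Tw_simple_mul_of_gt i x hgt]
    rw [smul_add, smul_smul, smul_smul, mul_comm (a x) q, mul_comm (a x) (q-1)]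
  rw [h1, h2]
  -- reindex h1's sum over the filter-not set
  have hre1 : ∑ x ∈ F.filter (fun x => cs.length x < cs.length (cs.simple i * x)),
        a x • Ctx.Tw (cs.simple i * x)
      = ∑ y ∈ F.filter (fun x => ¬ cs.length x < cs.length (cs.simple i * x)),
        a (cs.simple i * y) • Ctx.Tw y := by
    refine Finset.sum_nbij' (fun x => cs.simple i * x) (fun y => cs.simple i * y)
      hmem₁ hmem₂ (fun x _ => hcancel x) (fun y _ => hcancel y) ?_
    intro x _
    rw [hcancel]
  have hre2 : ∑ x ∈ F.filter (fun x => ¬ cs.length x < cs.length (cs.simple i * x)),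
        (q * a x) • Ctx.Tw (cs.simple i * x)
      = ∑ y ∈ F.filter (fun x => cs.length x < cs.length (cs.simple i * x)),
        (q * a (cs.simple i * y)) • Ctx.Tw y := by
    refine Finset.sum_nbij' (fun x => cs.simple i * x) (fun y => cs.simple i * y)
      hmem₂ hmem₁ (fun x _ => hcancel x) (fun y _ => hcancel y) ?_
    intro x _
    rw [hcancel]
  rw [Finset.sum_add_distrib, hre1, hre2]
  have hR1 : ∑ y ∈ F.filter (fun x => cs.length x < cs.length (cs.simple i * x)),
        (if cs.length (cs.simple i * y) < cs.length y
          then a (cs.simple i * y) + (q - 1) * a y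
          else q * a (cs.simple i * y)) • Ctx.Tw y
      = ∑ y ∈ F.filter (fun x => cs.length x < cs.length (cs.simple i * x)),
        (q * a (cs.simple i * y)) • Ctx.Tw y := by
    refine Finset.sum_congr rfl fun y hy => ?_
    rw [Finset.mem_filter] at hy
    rw [if_neg (by omega)]
  have hR2 : ∑ y ∈ F.filter (fun x => ¬ cs.length x < cs.length (cs.simple i * x)),
        (if cs.length (cs.simple i * y) < cs.length y
          then a (cs.simple i * y) + (q - 1) * a y
          else q * a (cs.simple i * y)) • Ctx.Tw y
      = ∑ y ∈ F.filter (fun x => ¬ cs.length x < cs.length (cs.simple i * x)),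
        (a (cs.simple i * y) • Ctx.Tw y + ((q - 1) * a y) • Ctx.Tw y) := by
    refine Finset.sum_congr rfl fun y hy => ?_
    rw [Finset.mem_filter] at hy
    have := cs.length_simple_mul_ne y i
    rw [if_pos (by omega), add_smul]
  rw [hR1, hR2, Finset.sum_add_distrib]
  abel

end TLContext





/-- `α` has only coefficients in degrees `< -k`. -/
def StrictNeg (k : ℕ) (α : A) : Prop := ∀ n : ℤ, -(k : ℤ) ≤ n → α.coeff n = 0

namespace TLContext
variable {B : Type*} {W : Type*} [Group W] {M : CoxeterMatrix B} {cs : CoxeterSystem M W}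
  {H : Type*} [Ring H] [Algebra A H] {TL : Type*} [Ring TL] [Algebra A TL]
  (Ctx : TLContext cs H TL)

lemma coeff_ext (G : Finset W) (d e : W → A)
    (h : ∑ z ∈ G, d z • Ctx.Tw z = ∑ z ∈ G, e z • Ctx.Tw z) :
    ∀ z ∈ G, d z = e z := by
  have hz : ∑ z ∈ G, (d z - e z) • Ctx.Tw z = 0 := by
    simp only [sub_smul, Finset.sum_sub_distrib, h, sub_self]
  intro z hzG
  exact sub_eq_zero.mp (linearIndependent_iff'.mp Ctx.Tw_indep G (fun z => d z - e z) hz z hzG)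

lemma uniqueness (F : Finset W) (cf : W → A)
    (hgood : ∀ x ∈ F, StrictNeg (cs.length x) (cf x))
    (hinv : Ctx.iotaH (∑ x ∈ F, cf x • Ctx.Tw x) = ∑ x ∈ F, cf x • Ctx.Tw x) :
    ∀ x ∈ F, cf x = 0 := by
  classical
  by_contra hcon
  push_neg at hcon
  obtain ⟨x₀, hx₀F, hx₀⟩ := hcon
  have hne : (F.filter (fun x => cf x ≠ 0)).Nonempty :=
    ⟨x₀, Finset.mem_filter.mpr ⟨hx₀F, hx₀⟩⟩
  obtain ⟨y, hyF', hymax⟩ := Finset.exists_max_image (F.filter (fun x => cf x ≠ 0))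
    (fun x => cs.length x) hne
  rw [Finset.mem_filter] at hyF'
  obtain ⟨hyF, hy0⟩ := hyF'
  set G : Finset W := F.biUnion (fun x => (Ctx.finite_bruhatLE x).toFinset) with hGdef
  have hFG : F ⊆ G := by
    intro x hx
    exact Finset.mem_biUnion.mpr ⟨x, hx, (Set.Finite.mem_toFinset _).mpr (bruhatLE_refl x)⟩
  have hlow : ∀ x ∈ F, ∀ z, bruhatLE cs z x → z ∈ G := by
    intro x hx z hzx
    exact Finset.mem_biUnion.mpr ⟨x, hx, (Set.Finite.mem_toFinset _).mpr hzx⟩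
  have hL : Ctx.iotaH (∑ x ∈ F, cf x • Ctx.Tw x)
      = ∑ z ∈ G, (∑ x ∈ F, LaurentPolynomial.invert (R := ℤ) (cf x) *
          (((-1 : A) ^ cs.length x * LaurentPolynomial.T (-2 * (cs.length x : ℤ)))
            * ((-1 : A) ^ cs.length z * Polynomial.aeval q (Ctx.R z x)))) • Ctx.Tw z := by
    rw [map_sum]
    have hterm : ∀ x ∈ F, Ctx.iotaH (cf x • Ctx.Tw x)
        = ∑ z ∈ G, (LaurentPolynomial.invert (R := ℤ) (cf x) *
          (((-1 : A) ^ cs.length x * LaurentPolynomial.T (-2 * (cs.length x : ℤ)))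
            * ((-1 : A) ^ cs.length z * Polynomial.aeval q (Ctx.R z x)))) • Ctx.Tw z := by
      intro x hx
      rw [Ctx.iotaH_smul, Ctx.iotaH_Tw, Ctx.Tinv_eq_sum x G (hlow x hx), Finset.smul_sum]
      exact Finset.sum_congr rfl fun z _ => (smul_smul _ _ _)
    rw [Finset.sum_congr rfl hterm, Finset.sum_comm]
    exact Finset.sum_congr rfl fun z _ => (Finset.sum_smul).symm
  have hR : ∑ x ∈ F, cf x • Ctx.Tw x
      = ∑ z ∈ G, (if z ∈ F then cf z else 0) • Ctx.Tw z := by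
    symm
    calc ∑ z ∈ G, (if z ∈ F then cf z else 0) • Ctx.Tw z
        = ∑ z ∈ G, (if z ∈ F then cf z • Ctx.Tw z else 0) := by
          refine Finset.sum_congr rfl fun z _ => ?_
          rw [ite_smul, zero_smul]
      _ = ∑ z ∈ G ∩ F, cf z • Ctx.Tw z := Finset.sum_ite_mem G F _
      _ = ∑ z ∈ F, cf z • Ctx.Tw z := by rw [Finset.inter_eq_right.mpr hFG]
  have h2 := hinv
  rw [hL, hR] at h2
  have hcoef := Ctx.coeff_ext G _ _ h2 y (hFG hyF)
  rw [if_pos hyF] at hcoef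
  -- evaluate the sum at `y`
  have hsum : ∑ x ∈ F, LaurentPolynomial.invert (R := ℤ) (cf x) *
          (((-1 : A) ^ cs.length x * LaurentPolynomial.T (-2 * (cs.length x : ℤ)))
            * ((-1 : A) ^ cs.length y * Polynomial.aeval q (Ctx.R y x)))
      = LaurentPolynomial.invert (R := ℤ) (cf y)
          * LaurentPolynomial.T (-2 * (cs.length y : ℤ)) := by
    rw [Finset.sum_eq_single y]
    · rw [Ctx.R_self, map_one, mul_one]
      rw [show ((-1 : A) ^ cs.length y * LaurentPolynomial.T (-2 * (cs.length y : ℤ)))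
            * ((-1 : A) ^ cs.length y)
          = ((-1 : A) ^ cs.length y * (-1 : A) ^ cs.length y)
              * LaurentPolynomial.T (-2 * (cs.length y : ℤ)) from by ring]
      rw [← mul_pow, neg_mul_neg, one_mul, one_pow, one_mul]
    · intro x hxF hxy
      by_cases h0 : cf x = 0
      · rw [h0, map_zero, zero_mul]
      · by_cases hle : bruhatLE cs y x
        · have h1 : cs.length x ≤ cs.length y :=
            hymax x (Finset.mem_filter.mpr ⟨hxF, h0⟩)
          exact absurd (eq_of_bruhatLE_of_length_le hle h1) (fun he => hxy he.symm)
        · rw [Ctx.R_eq_zero y x hle, map_zero, mul_zero, mul_zero, mul_zero]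
    · intro hyF'
      exact absurd hyF hyF'
  rw [hsum] at hcoef
  -- coefficientwise contradiction
  have hzero : cf y = 0 := by
    apply LaurentPolynomial.ext
    intro n
    rcases le_or_gt (-(cs.length y : ℤ)) n with hn | hn
    · rw [hgood y hyF n hn]; rfl
    · have : (cf y).coeff n = (cf y).coeff (-n - 2 * (cs.length y : ℤ)) := by
        conv_lhs => rw [← hcoef]
        rw [mul_T_apply]
        rw [show n - -2 * (cs.length y : ℤ) = -(-n - 2 * (cs.length y : ℤ)) from by ring]
        rw [LaurentPolynomial.invert_apply, neg_neg]
      rw [this, hgood y hyF _ (by omega)]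
      rfl
  exact hy0 hzero

end TLContext




namespace TLContext
variable {B : Type*} {W : Type*} [Group W] {M : CoxeterMatrix B} {cs : CoxeterSystem M W}
  {H : Type*} [Ring H] [Algebra A H] {TL : Type*} [Ring TL] [Algebra A TL]
  (Ctx : TLContext cs H TL)

/-- `P_{x,u}(q)` as an element of `A`. -/
def Pq (x u : W) : A := Polynomial.aeval q (Ctx.P x u)

lemma Pq_not_le {x u : W} (h : ¬ bruhatLE cs x u) : Ctx.Pq x u = 0 := by
  rw [Pq, Ctx.P_eq_zero x u h, map_zero]

lemma Pq_self (u : W) : Ctx.Pq u u = 1 := by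
  rw [Pq, Ctx.P_self, map_one]

lemma cKL_apply (u x : W) (n : ℤ) :
    (Ctx.cKL u x).coeff n = (Ctx.Pq x u).coeff (n + cs.length u) := by
  rw [TLContext.cKL, T_mul_apply, sub_neg_eq_add]
  rfl

lemma Pq_bound {x u : W} (hlt : bruhatLT cs x u) {n : ℤ}
    (hn : (cs.length u : ℤ) - cs.length x - 1 < n) : (Ctx.Pq x u).coeff n = 0 := by
  have hd := Ctx.P_degree x u hlt
  have hl := length_lt_of_bruhatLT hlt
  exact Pq_apply_eq_zero_of_lt _ (by omega)

lemma Pq_mu {x w : W} (hlt : cs.length x < cs.length w) :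
    (Ctx.Pq x w).coeff ((cs.length w : ℤ) - cs.length x - 1) = (Ctx.mu x w : ℤ) := by
  rw [Pq, TLContext.mu]
  by_cases hodd : Odd (cs.length w - cs.length x)
  · rw [if_pos hodd]
    obtain ⟨d, hd⟩ := hodd
    rw [show ((cs.length w : ℤ) - cs.length x - 1)
        = 2 * ((cs.length w - cs.length x - 1) / 2 : ℕ) from by omega, Pq_apply_two_mul]
  · rw [if_neg hodd]
    have heven : Even (cs.length w - cs.length x) := Nat.not_odd_iff_even.mp hodd
    obtain ⟨d, hd⟩ := heven
    exact Pq_apply_eq_zero_of_odd _ ⟨(d : ℤ) - 1, by omega⟩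

lemma int_mul_apply (m : ℤ) (f : A) (n : ℤ) : (((m : ℤ) : A) * f).coeff n = m * f.coeff n := by
  have h1 : ((m : ℤ) : A) = LaurentPolynomial.C m :=
    (map_intCast (LaurentPolynomial.C : ℤ →+* A) m).symm
  rw [h1, show (LaurentPolynomial.C m : A) = AddMonoidAlgebra.single 0 m from rfl,
    AddMonoidAlgebra.coeff_single_mul_apply]
  norm_num

open scoped Classical in
/-- The set indexing the `μ`-sum. -/
def muSet (i : B) (w : W) : Finset W :=
  (Ctx.finite_bruhatLE w).toFinset.filter
    (fun x => bruhatLT cs x w ∧ Ctx.mu x w ≠ 0 ∧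
      cs.length (cs.simple i * x) < cs.length x)

lemma mem_muSet {i : B} {w x : W} :
    x ∈ Ctx.muSet i w ↔ (bruhatLT cs x w ∧ Ctx.mu x w ≠ 0 ∧
      cs.length (cs.simple i * x) < cs.length x) := by
  classical
  rw [muSet, Finset.mem_filter]
  constructor
  · intro h
    exact h.2
  · intro h
    exact ⟨(Set.Finite.mem_toFinset _).mpr h.1.1, h⟩

lemma iotaH_KL' (u : W) : Ctx.iotaH (Ctx.KL u) = Ctx.KL u := by
  rw [TLContext.KL]; exact Ctx.iotaH_KL u

end TLContext




namespace TLContext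
variable {B : Type*} {W : Type*} [Group W] {M : CoxeterMatrix B} {cs : CoxeterSystem M W}
  {H : Type*} [Ring H] [Algebra A H] {TL : Type*} [Ring TL] [Algebra A TL]
  (Ctx : TLContext cs H TL)

/-- The `bf` coefficient function. -/
def bfn (i : B) (w : W) : W → A := fun y =>
  if cs.length (cs.simple i * y) < cs.length y
    then Ctx.cKL w (cs.simple i * y) + (q - 1) * Ctx.cKL w y
    else q * Ctx.cKL w (cs.simple i * y)

/-- The total coefficient function whose vanishing is the heart of the multiplication
formula. -/
def Afn (i : B) (w : W) : W → A := fun x =>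
  (LaurentPolynomial.T (-1) : A) * (Ctx.bfn i w x + Ctx.cKL w x)
    - Ctx.cKL (cs.simple i * w) x
    - ∑ z ∈ Ctx.muSet i w, ((Ctx.mu z w : ℤ) : A) * Ctx.cKL z x

lemma zero_apply_A (n : ℤ) : (0 : A).coeff n = 0 := rfl

lemma Afn_strictNeg (i : B) (w : W)
    (hw : cs.length w < cs.length (cs.simple i * w)) (x : W) :
    StrictNeg (cs.length x) (Ctx.Afn i w x) := by
  classical
  intro n₀ hn₀
  have hcancel : ∀ y : W, cs.simple i * (cs.simple i * y) = y := fun y => by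
    rw [← mul_assoc, cs.simple_mul_simple_self, one_mul]
  have hsw : cs.length (cs.simple i * w) = cs.length w + 1 := by
    rcases cs.length_simple_mul w i with h | h
    · exact h
    · omega
  -- helper : vanishing of `Pq y u m` from a length bound, when `y ≠ u`
  have hP3 : ∀ (y u : W) (m : ℤ), y ≠ u → ((cs.length u : ℤ) - cs.length y - 1 < m) →
      (Ctx.Pq y u).coeff m = 0 := by
    intro y u m hne hm
    by_cases hle : bruhatLE cs y u
    · rcases bruhatLE_cases hle with he | hlt
      · exact absurd he hne
      · exact Ctx.Pq_bound hlt hm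
    · rw [Ctx.Pq_not_le hle, zero_apply_A]
  have hSapply : (∑ z ∈ Ctx.muSet i w, ((Ctx.mu z w : ℤ) : A) * Ctx.cKL z x).coeff n₀
      = ∑ z ∈ Ctx.muSet i w, (Ctx.mu z w) * ((Ctx.Pq x z).coeff (n₀ + cs.length z)) := by
    rw [AddMonoidAlgebra.coeff_sum, Finsupp.finset_sum_apply]
    exact Finset.sum_congr rfl fun z _ => by rw [int_mul_apply, Ctx.cKL_apply]
  have hz_facts : ∀ z ∈ Ctx.muSet i w, bruhatLT cs z w ∧ Ctx.mu z w ≠ 0 ∧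
      cs.length (cs.simple i * z) < cs.length z := fun z hz => Ctx.mem_muSet.mp hz
  by_cases hcase : cs.length (cs.simple i * x) < cs.length x
  · -- branch `s x < x`
    have hlsx : cs.length (cs.simple i * x) + 1 = cs.length x := by
      rcases cs.length_simple_mul x i with h | h
      · omega
      · exact h
    have hbfa : Ctx.bfn i w x + Ctx.cKL w x
        = Ctx.cKL w (cs.simple i * x) + q * Ctx.cKL w x := by
      rw [bfn]; simp only [if_pos hcase]; ring
    have hmain : (Ctx.Afn i w x).coeff n₀
        = (Ctx.Pq (cs.simple i * x) w).coeff (n₀ + 1 + cs.length w)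
          + (Ctx.Pq x w).coeff (n₀ - 1 + cs.length w)
          - (Ctx.Pq x (cs.simple i * w)).coeff (n₀ + cs.length w + 1)
          - ∑ z ∈ Ctx.muSet i w, (Ctx.mu z w) * ((Ctx.Pq x z).coeff (n₀ + cs.length z)) := by
      rw [Afn, AddMonoidAlgebra.coeff_sub, AddMonoidAlgebra.coeff_sub, Finsupp.sub_apply, Finsupp.sub_apply, T_mul_apply, hSapply, Ctx.cKL_apply, hsw]
      rw [show n₀ - (-1) = n₀ + 1 from by ring, hbfa, AddMonoidAlgebra.coeff_add, Finsupp.add_apply]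
      rw [show (q : A) = LaurentPolynomial.T 2 from rfl, T_mul_apply]
      rw [Ctx.cKL_apply, Ctx.cKL_apply]
      rw [show n₀ + 1 - 2 = n₀ - 1 from by ring,
        show n₀ + ((cs.length w : ℕ) + 1 : ℕ) = n₀ + (cs.length w : ℤ) + 1 from by push_cast; ring]
    by_cases hxsw : x = cs.simple i * w
    · -- `x = sw` : exact cancellation of the two `P = 1` terms
      subst hxsw
      rw [hmain, hcancel, Ctx.Pq_self, Ctx.Pq_self]
      rw [show n₀ + 1 + (cs.length w : ℤ) = n₀ + (cs.length w : ℤ) + 1 from by ring]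
      have ht2 : (Ctx.Pq (cs.simple i * w) w).coeff (n₀ - 1 + cs.length w) = 0 := by
        rw [Ctx.Pq_not_le (not_bruhatLE_of_length_lt (by omega)), zero_apply_A]
      have ht4 : ∀ z ∈ Ctx.muSet i w,
          (Ctx.mu z w) * ((Ctx.Pq (cs.simple i * w) z).coeff (n₀ + cs.length z)) = 0 := by
        intro z hz
        have hlz := length_lt_of_bruhatLT (hz_facts z hz).1
        rw [Ctx.Pq_not_le (not_bruhatLE_of_length_lt (by omega)), zero_apply_A, mul_zero]
      rw [ht2, Finset.sum_eq_zero ht4]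
      ring
    · -- `x ≠ sw`
      have hlx : cs.length x = cs.length (cs.simple i * x) + 1 := hlsx.symm
      have ht1 : (Ctx.Pq (cs.simple i * x) w).coeff (n₀ + 1 + cs.length w) = 0 := by
        refine hP3 _ _ _ (fun he => hxsw ?_) (by omega)
        rw [← he, hcancel]
      have ht3 : (Ctx.Pq x (cs.simple i * w)).coeff (n₀ + cs.length w + 1) = 0 := by
        refine hP3 _ _ _ hxsw (by omega)
      have hxw : x ≠ w := by
        intro he
        subst he
        omega
      rcases eq_or_lt_of_le hn₀ with hn0eq | hn0gt
      · -- border case `n₀ = -ℓ x`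
        have hn0 : n₀ = -(cs.length x : ℤ) := hn0eq.symm
        by_cases hlew : bruhatLE cs x w
        · have hltw : bruhatLT cs x w := ⟨hlew, hxw⟩
          have hlxw := length_lt_of_bruhatLT hltw
          have ht2 : (Ctx.Pq x w).coeff (n₀ - 1 + cs.length w) = (Ctx.mu x w : ℤ) := by
            rw [show n₀ - 1 + (cs.length w : ℤ)
              = (cs.length w : ℤ) - cs.length x - 1 from by omega]
            exact Ctx.Pq_mu hlxw
          have ht4 : ∑ z ∈ Ctx.muSet i w, (Ctx.mu z w) * ((Ctx.Pq x z).coeff (n₀ + cs.length z))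
              = (Ctx.mu x w : ℤ) := by
            by_cases hmu : Ctx.mu x w = 0
            · rw [hmu]
              refine Finset.sum_eq_zero fun z hz => ?_
              obtain ⟨hz1, hz2, hz3⟩ := hz_facts z hz
              have hzx : z ≠ x := fun he => hz2 (by rw [he, hmu])
              rw [hP3 x z _ (fun he => hzx he.symm) (by omega), mul_zero]
            · have hxmem : x ∈ Ctx.muSet i w := Ctx.mem_muSet.mpr ⟨hltw, hmu, hcase⟩
              rw [Finset.sum_eq_single x]
              · rw [Ctx.Pq_self, show n₀ + (cs.length x : ℤ) = 0 from by omega,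
                  one_apply_A, if_pos rfl, mul_one]
              · intro z hz hzx
                rw [hP3 x z _ (fun he => hzx he.symm) (by omega), mul_zero]
              · intro hnot
                exact absurd hxmem hnot
          rw [hmain, ht1, ht2, ht3, ht4]
          ring
        · have ht2 : (Ctx.Pq x w).coeff (n₀ - 1 + cs.length w) = 0 := by
            rw [Ctx.Pq_not_le hlew, zero_apply_A]
          have ht4 : ∑ z ∈ Ctx.muSet i w, (Ctx.mu z w) * ((Ctx.Pq x z).coeff (n₀ + cs.length z)) = 0 := by
            refine Finset.sum_eq_zero fun z hz => ?_
            have hxz : ¬ bruhatLE cs x z := fun hc =>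
              hlew (Relation.ReflTransGen.trans hc (hz_facts z hz).1.1)
            rw [Ctx.Pq_not_le hxz, zero_apply_A, mul_zero]
          rw [hmain, ht1, ht2, ht3, ht4]
          ring
      · -- case `n₀ ≥ 1 - ℓ x`
        have ht2 : (Ctx.Pq x w).coeff (n₀ - 1 + cs.length w) = 0 :=
          hP3 _ _ _ hxw (by omega)
        have ht4 : ∑ z ∈ Ctx.muSet i w, (Ctx.mu z w) * ((Ctx.Pq x z).coeff (n₀ + cs.length z)) = 0 := by
          refine Finset.sum_eq_zero fun z hz => ?_
          by_cases hzx : z = x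
          · subst hzx
            rw [Ctx.Pq_self, one_apply_A, if_neg (by omega), mul_zero]
          · rw [hP3 x z _ (fun he => hzx he.symm) (by omega), mul_zero]
        rw [hmain, ht1, ht2, ht3, ht4]
        ring
  · -- branch `x < s x`
    have hlsx : cs.length (cs.simple i * x) = cs.length x + 1 := by
      rcases cs.length_simple_mul x i with h | h
      · exact h
      · omega
    have hbfa : Ctx.bfn i w x + Ctx.cKL w x
        = q * Ctx.cKL w (cs.simple i * x) + Ctx.cKL w x := by
      rw [bfn]; simp only [if_neg hcase]
    have hmain : (Ctx.Afn i w x).coeff n₀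
        = (Ctx.Pq (cs.simple i * x) w).coeff (n₀ - 1 + cs.length w)
          + (Ctx.Pq x w).coeff (n₀ + 1 + cs.length w)
          - (Ctx.Pq x (cs.simple i * w)).coeff (n₀ + cs.length w + 1)
          - ∑ z ∈ Ctx.muSet i w, (Ctx.mu z w) * ((Ctx.Pq x z).coeff (n₀ + cs.length z)) := by
      rw [Afn, AddMonoidAlgebra.coeff_sub, AddMonoidAlgebra.coeff_sub, Finsupp.sub_apply, Finsupp.sub_apply, T_mul_apply, hSapply, Ctx.cKL_apply, hsw]
      rw [show n₀ - (-1) = n₀ + 1 from by ring, hbfa, AddMonoidAlgebra.coeff_add, Finsupp.add_apply]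
      rw [show (q : A) = LaurentPolynomial.T 2 from rfl, T_mul_apply]
      rw [Ctx.cKL_apply, Ctx.cKL_apply]
      rw [show n₀ + 1 - 2 = n₀ - 1 from by ring,
        show n₀ + ((cs.length w : ℕ) + 1 : ℕ) = n₀ + (cs.length w : ℤ) + 1 from by push_cast; ring]
    have hxsw : x ≠ cs.simple i * w := by
      intro he
      rw [he, hcancel] at hlsx
      omega
    have ht1 : (Ctx.Pq (cs.simple i * x) w).coeff (n₀ - 1 + cs.length w) = 0 := by
      refine hP3 _ _ _ (fun he => ?_) (by omega)
      rw [← he, hcancel] at hxsw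
      exact hxsw rfl
    have ht2 : (Ctx.Pq x w).coeff (n₀ + 1 + cs.length w) = 0 := by
      by_cases hxw : x = w
      · subst hxw
        rw [Ctx.Pq_self, one_apply_A, if_neg (by omega)]
      · exact hP3 _ _ _ hxw (by omega)
    have ht3 : (Ctx.Pq x (cs.simple i * w)).coeff (n₀ + cs.length w + 1) = 0 :=
      hP3 _ _ _ hxsw (by omega)
    have ht4 : ∑ z ∈ Ctx.muSet i w, (Ctx.mu z w) * ((Ctx.Pq x z).coeff (n₀ + cs.length z)) = 0 := by
      refine Finset.sum_eq_zero fun z hz => ?_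
      have hzx : z ≠ x := by
        intro he
        exact hcase (by rw [← he]; exact (hz_facts z hz).2.2)
      rw [hP3 x z _ (fun he => hzx he.symm) (by omega), mul_zero]
    rw [hmain, ht1, ht2, ht3, ht4]
    ring

end TLContext




namespace TLContext
variable {B : Type*} {W : Type*} [Group W] {M : CoxeterMatrix B} {cs : CoxeterSystem M W}
  {H : Type*} [Ring H] [Algebra A H] {TL : Type*} [Ring TL] [Algebra A TL]
  (Ctx : TLContext cs H TL)

lemma KL_simple_mul_of_lt (i : B) (w : W)
    (hw : cs.length w < cs.length (cs.simple i * w)) :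
    Ctx.Tw (cs.simple i) * Ctx.KL w
      = - Ctx.KL w + (LaurentPolynomial.T 1 : A) •
        (Ctx.KL (cs.simple i * w) + ∑ z ∈ Ctx.muSet i w, Ctx.mu z w • Ctx.KL z) := by
  classical
  have hcancel : ∀ x : W, cs.simple i * (cs.simple i * x) = x := fun x => by
    rw [← mul_assoc, cs.simple_mul_simple_self, one_mul]
  have hsw : cs.length (cs.simple i * w) = cs.length w + 1 := by
    rcases cs.length_simple_mul w i with h | h
    · exact h
    · omega
  set Dw : Finset W := (Ctx.finite_bruhatLE w).toFinset with hDw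
  set Dsw : Finset W := (Ctx.finite_bruhatLE (cs.simple i * w)).toFinset with hDsw
  set E : Finset W := (Dw ∪ Dsw) ∪ (Dw ∪ Dsw).image (fun x => cs.simple i * x) with hE
  have hEclosed : ∀ x ∈ E, cs.simple i * x ∈ E := by
    intro x hx
    rw [hE, Finset.mem_union] at hx
    rcases hx with hx | hx
    · exact Finset.mem_union_right _ (Finset.mem_image.mpr ⟨x, hx, rfl⟩)
    · obtain ⟨y, hy, rfl⟩ := Finset.mem_image.mp hx
      rw [hcancel]
      exact Finset.mem_union_left _ hy
  have hEw : ∀ x, bruhatLE cs x w → x ∈ E := fun x hx =>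
    Finset.mem_union_left _ (Finset.mem_union_left _ ((Set.Finite.mem_toFinset _).mpr hx))
  have hEsw : ∀ x, bruhatLE cs x (cs.simple i * w) → x ∈ E := fun x hx =>
    Finset.mem_union_left _ (Finset.mem_union_right _ ((Set.Finite.mem_toFinset _).mpr hx))
  have hEz : ∀ z ∈ Ctx.muSet i w, ∀ x, bruhatLE cs x z → x ∈ E := by
    intro z hz x hxz
    exact hEw x (Relation.ReflTransGen.trans hxz (Ctx.mem_muSet.mp hz).1.1)
  set a : W → A := Ctx.cKL w with ha
  set bf : W → A := fun y => if cs.length (cs.simple i * y) < cs.length y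
      then a (cs.simple i * y) + (q - 1) * a y else q * a (cs.simple i * y) with hbf
  set Af : W → A := fun x => (LaurentPolynomial.T (-1) : A) * (bf x + a x)
      - Ctx.cKL (cs.simple i * w) x
      - ∑ z ∈ Ctx.muSet i w, ((Ctx.mu z w : ℤ) : A) * Ctx.cKL z x with hAf
  have hKLw : Ctx.KL w = ∑ x ∈ E, a x • Ctx.Tw x := Ctx.KL_eq_sum w E hEw
  have hTsKLw : Ctx.Tw (cs.simple i) * Ctx.KL w = ∑ x ∈ E, bf x • Ctx.Tw x := by
    rw [hKLw]
    exact Ctx.Tw_simple_mul_sum i E hEclosed a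
  have hKLsw : Ctx.KL (cs.simple i * w)
      = ∑ x ∈ E, Ctx.cKL (cs.simple i * w) x • Ctx.Tw x :=
    Ctx.KL_eq_sum (cs.simple i * w) E hEsw
  have hmusum : ∑ z ∈ Ctx.muSet i w, Ctx.mu z w • Ctx.KL z
      = ∑ x ∈ E, (∑ z ∈ Ctx.muSet i w, ((Ctx.mu z w : ℤ) : A) * Ctx.cKL z x) • Ctx.Tw x := by
    have hterm : ∀ z ∈ Ctx.muSet i w, Ctx.mu z w • Ctx.KL z
        = ∑ x ∈ E, (((Ctx.mu z w : ℤ) : A) * Ctx.cKL z x) • Ctx.Tw x := by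
      intro z hz
      rw [Ctx.KL_eq_sum z E (hEz z hz), Finset.smul_sum]
      refine Finset.sum_congr rfl fun x _ => ?_
      rw [← smul_smul, Int.cast_smul_eq_zsmul]
    rw [Finset.sum_congr rfl hterm, Finset.sum_comm]
    exact Finset.sum_congr rfl fun x _ => (Finset.sum_smul).symm
  have hrep : (LaurentPolynomial.T (-1) : A) •
        (Ctx.Tw (cs.simple i) * Ctx.KL w + Ctx.KL w)
        - (Ctx.KL (cs.simple i * w) + ∑ z ∈ Ctx.muSet i w, Ctx.mu z w • Ctx.KL z)
      = ∑ x ∈ E, Af x • Ctx.Tw x := by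
    rw [hTsKLw, hKLw, hKLsw, hmusum, ← Finset.sum_add_distrib, Finset.smul_sum,
      ← Finset.sum_add_distrib, ← Finset.sum_sub_distrib]
    refine Finset.sum_congr rfl fun x _ => ?_
    rw [← add_smul, smul_smul, ← add_smul, ← sub_smul]
    simp only [hAf, sub_sub]
  have hinv : Ctx.iotaH ((LaurentPolynomial.T (-1) : A) •
        (Ctx.Tw (cs.simple i) * Ctx.KL w + Ctx.KL w)
        - (Ctx.KL (cs.simple i * w) + ∑ z ∈ Ctx.muSet i w, Ctx.mu z w • Ctx.KL z))
      = (LaurentPolynomial.T (-1) : A) •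
        (Ctx.Tw (cs.simple i) * Ctx.KL w + Ctx.KL w)
        - (Ctx.KL (cs.simple i * w) + ∑ z ∈ Ctx.muSet i w, Ctx.mu z w • Ctx.KL z) := by
    rw [map_sub]
    have h1 : Ctx.iotaH ((LaurentPolynomial.T (-1) : A) •
          (Ctx.Tw (cs.simple i) * Ctx.KL w + Ctx.KL w))
        = (LaurentPolynomial.T (-1) : A) •
          (Ctx.Tw (cs.simple i) * Ctx.KL w + Ctx.KL w) := by
      rw [Ctx.iotaH_smul, map_add, map_mul, Ctx.iotaH_Tw, cs.inv_simple, Ctx.iotaH_KL',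
        LaurentPolynomial.invert_T, neg_neg, Ctx.Tinv_simple i]
      rw [add_mul, smul_mul_assoc, smul_mul_assoc, one_mul]
      rw [smul_add, smul_add, smul_smul, smul_smul]
      have e1 : (LaurentPolynomial.T 1 : A) * LaurentPolynomial.T (-2)
          = LaurentPolynomial.T (-1) := by
        rw [← LaurentPolynomial.T_add]; norm_num
      have e2 : (LaurentPolynomial.T 1 : A) * (LaurentPolynomial.T (-2) - 1)
          = LaurentPolynomial.T (-1) - LaurentPolynomial.T 1 := by
        rw [mul_sub, mul_one, e1]
      rw [e1, e2, smul_add, sub_smul]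
      abel
    have h2 : Ctx.iotaH (Ctx.KL (cs.simple i * w)
          + ∑ z ∈ Ctx.muSet i w, Ctx.mu z w • Ctx.KL z)
        = Ctx.KL (cs.simple i * w) + ∑ z ∈ Ctx.muSet i w, Ctx.mu z w • Ctx.KL z := by
      rw [map_add, Ctx.iotaH_KL', map_sum]
      congr 1
      refine Finset.sum_congr rfl fun z _ => ?_
      rw [map_zsmul, Ctx.iotaH_KL']
    rw [h1, h2]
  have hvanish : ∀ x ∈ E, StrictNeg (cs.length x) (Af x) := by
    intro x _
    exact Ctx.Afn_strictNeg i w hw x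
  have hzero := Ctx.uniqueness E Af hvanish (by rw [← hrep]; exact hinv)
  have h0 : (LaurentPolynomial.T (-1) : A) •
        (Ctx.Tw (cs.simple i) * Ctx.KL w + Ctx.KL w)
      = Ctx.KL (cs.simple i * w) + ∑ z ∈ Ctx.muSet i w, Ctx.mu z w • Ctx.KL z := by
    have : (LaurentPolynomial.T (-1) : A) •
        (Ctx.Tw (cs.simple i) * Ctx.KL w + Ctx.KL w)
        - (Ctx.KL (cs.simple i * w) + ∑ z ∈ Ctx.muSet i w, Ctx.mu z w • Ctx.KL z) = 0 := by
      rw [hrep]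
      exact Finset.sum_eq_zero fun x hx => by rw [hzero x hx, zero_smul]
    exact sub_eq_zero.mp this
  have h1 : Ctx.Tw (cs.simple i) * Ctx.KL w + Ctx.KL w
      = (LaurentPolynomial.T 1 : A) •
        (Ctx.KL (cs.simple i * w) + ∑ z ∈ Ctx.muSet i w, Ctx.mu z w • Ctx.KL z) := by
    rw [← h0, smul_smul, ← LaurentPolynomial.T_add]
    norm_num [LaurentPolynomial.T_zero]
  have h2 : Ctx.KL w + Ctx.Tw (cs.simple i) * Ctx.KL w
      = (LaurentPolynomial.T 1 : A) •
        (Ctx.KL (cs.simple i * w) + ∑ z ∈ Ctx.muSet i w, Ctx.mu z w • Ctx.KL z) := by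
    rw [add_comm]; exact h1
  exact eq_neg_add_of_add_eq h2

end TLContext




namespace TLContext
variable {B : Type*} {W : Type*} [Group W] {M : CoxeterMatrix B} {cs : CoxeterSystem M W}
  {H : Type*} [Ring H] [Algebra A H] {TL : Type*} [Ring TL] [Algebra A TL]
  (Ctx : TLContext cs H TL)

lemma KL_simple_mul_of_gt :
    ∀ (i : B) (w : W), cs.length (cs.simple i * w) < cs.length w →
      Ctx.Tw (cs.simple i) * Ctx.KL w = q • Ctx.KL w := by
  suffices aux : ∀ (n : ℕ) (w : W), cs.length w = n → ∀ (i : B),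
      cs.length (cs.simple i * w) < cs.length w →
      Ctx.Tw (cs.simple i) * Ctx.KL w = q • Ctx.KL w by
    intro i w hw
    exact aux (cs.length w) w rfl i hw
  intro n
  induction n using Nat.strong_induction_on with
  | _ n ih =>
    intro w hlen i hw
    have hcancel : ∀ y : W, cs.simple i * (cs.simple i * y) = y := fun y => by
      rw [← mul_assoc, cs.simple_mul_simple_self, one_mul]
    set w' := cs.simple i * w with hw'def
    have hww' : cs.simple i * w' = w := hcancel w
    have hlw' : cs.length w' + 1 = cs.length w := by
      rcases cs.length_simple_mul w i with h | h
      · rw [← hw'def] at h; omega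
      · rw [← hw'def] at h; exact h
    have hlt' : cs.length w' < cs.length (cs.simple i * w') := by
      rw [hww']; omega
    have hc1 := Ctx.KL_simple_mul_of_lt i w' hlt'
    rw [hww'] at hc1
    set S := ∑ z ∈ Ctx.muSet i w', Ctx.mu z w' • Ctx.KL z with hS
    set X := Ctx.Tw (cs.simple i) * Ctx.KL w' with hX
    -- `KL w = T(-1) • (X + KL w') - S`
    have hKLw : Ctx.KL w = (LaurentPolynomial.T (-1) : A) • (X + Ctx.KL w') - S := by
      have h1 : X + Ctx.KL w' = (LaurentPolynomial.T 1 : A) • (Ctx.KL w + S) := by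
        rw [hc1]; abel
      rw [h1, smul_smul, ← LaurentPolynomial.T_add]
      norm_num
    -- `T_s X = q • KL w' + (q-1) • X`
    have hTsX : Ctx.Tw (cs.simple i) * X = q • Ctx.KL w' + (q - 1) • X := by
      rw [hX, ← mul_assoc, Ctx.Tw_simple_sq, add_mul, smul_mul_assoc, smul_mul_assoc, one_mul]
    -- `T_s S = q • S` by induction
    have hTsS : Ctx.Tw (cs.simple i) * S = q • S := by
      rw [hS, Finset.mul_sum, Finset.smul_sum]
      refine Finset.sum_congr rfl fun z hz => ?_
      obtain ⟨hz1, _, hz3⟩ := Ctx.mem_muSet.mp hz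
      have hlz : cs.length z < n := by
        have := length_lt_of_bruhatLT hz1
        omega
      rw [mul_smul_comm, ih (cs.length z) (by omega) z rfl i hz3, smul_comm]
    rw [hKLw, mul_sub, mul_smul_comm, mul_add, hTsX, hTsS]
    have hcomb : q • Ctx.KL w' + (q - 1) • X + X = q • (X + Ctx.KL w') := by
      rw [sub_smul, one_smul, smul_add]
      abel
    rw [hcomb, smul_comm, ← smul_sub]

end TLContext




namespace TLContext
variable {B : Type*} {W : Type*} [Group W] {M : CoxeterMatrix B} {cs : CoxeterSystem M W}
  {H : Type*} [Ring H] [Algebra A H] {TL : Type*} [Ring TL] [Algebra A TL]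
  (Ctx : TLContext cs H TL)

lemma proj_KL (hstar : Ctx.Star) (u : W) : Ctx.proj (Ctx.KL u) = Ctx.c u := by
  by_cases hu : FullyCommutative cs u
  · exact hstar.1 u hu
  · rw [hstar.2 u hu, Ctx.c_eq_zero u hu]

lemma muSet_coe (i : B) (w : W) :
    {x | bruhatLT cs x w ∧ Ctx.mu x w ≠ 0 ∧
        cs.length (cs.simple i * x) < cs.length x}
      = ((Ctx.muSet i w : Finset W) : Set W) := by
  ext x
  rw [Finset.mem_coe, Ctx.mem_muSet]
  rfl

end TLContext



/-- Corollary (paper, Cor. `txc`): if `X` satisfies (★), `s ∈ S` and `w ∈ W_c`, then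
`t_s c_w = -c_w + q^{1/2}(c_{sw} + Σ_{x ≺ w, sx < x} μ(x,w) c_x)` if `ℓ(sw) > ℓ(w)`, and
`t_s c_w = q c_w` otherwise (with the convention `c_x = 0` for `x ∉ W_c`). -/
theorem statement5 {B : Type*} {W : Type*} [Group W] {M : CoxeterMatrix B} {cs : CoxeterSystem M W}
    {H : Type*} [Ring H] [Algebra A H] {TL : Type*} [Ring TL] [Algebra A TL]
    (Ctx : TLContext cs H TL)
    (hstar : Ctx.Star) (i : B) (w : W) (hw : FullyCommutative cs w) :
    (cs.length w < cs.length (cs.simple i * w) →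
      Ctx.proj (Ctx.Tw (cs.simple i)) * Ctx.c w =
        - Ctx.c w + (LaurentPolynomial.T 1 : A) •
          (Ctx.c (cs.simple i * w) +
            ∑ᶠ x ∈ {x | bruhatLT cs x w ∧ Ctx.mu x w ≠ 0 ∧
                cs.length (cs.simple i * x) < cs.length x},
              Ctx.mu x w • Ctx.c x)) ∧
    (¬ cs.length w < cs.length (cs.simple i * w) →
      Ctx.proj (Ctx.Tw (cs.simple i)) * Ctx.c w = q • Ctx.c w) := by
  have hsum : ∑ᶠ x ∈ {x | bruhatLT cs x w ∧ Ctx.mu x w ≠ 0 ∧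
        cs.length (cs.simple i * x) < cs.length x}, Ctx.mu x w • Ctx.c x
      = ∑ z ∈ Ctx.muSet i w, Ctx.mu z w • Ctx.c z := by
    rw [Ctx.muSet_coe i w, finsum_mem_coe_finset]
  constructor
  · intro hlt
    have hKL := Ctx.KL_simple_mul_of_lt i w hlt
    have hc := congrArg Ctx.proj hKL
    rw [map_mul, map_add, map_neg, map_smul, map_add, map_sum] at hc
    simp only [map_zsmul, Ctx.proj_KL hstar] at hc
    rw [hsum]
    exact hc
  · intro hnlt
    have hgt : cs.length (cs.simple i * w) < cs.length w := by
      have := cs.length_simple_mul_ne w i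
      omega
    have hKL := Ctx.KL_simple_mul_of_gt i w hgt
    have hc := congrArg Ctx.proj hKL
    rw [map_mul, map_smul] at hc
    simp only [Ctx.proj_KL hstar] at hc
    exact hc

end TLPaper
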